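/- Let {g_u}_{u∈G} be a bounded family of elements of a Hilbert space H indexed by a finitely generated abelian group G and let {Φ_N} be a Følner sequence in G. Then there exists a Følner sequence {Θ_M} in G³ such that limsup_{N→∞} ‖(1/|Φ_N|) Σ_{u∈Φ_N} g_u‖² ≤ limsup_{M→∞} (1/|Θ_M|) Σ_{(u,v,w)∈Θ_M} ⟨g_{u+v}, g_{u+w}⟩. -/

import Mathlib

open MeasureTheory Filter

/-- A Følner sequence of finite subsets of an additive group: translates of `Φ N`
asymptotically almost coincide with `Φ N`. -/
def IsFolner {G : Type*} [AddCommGroup G] [DecidableEq G] (Φ : ℕ → Finset G) : Prop :=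
  (∀ N, (Φ N).Nonempty) ∧
  ∀ g : G, Filter.Tendsto
    (fun N => (((((Φ N).image (fun x => g + x)) \ Φ N) ∪
        (Φ N \ ((Φ N).image (fun x => g + x)))).card : ℝ) / (Φ N).card)
    Filter.atTop (nhds 0)

section helpers

variable {G₁ G₂ : Type*} [AddCommGroup G₁] [AddCommGroup G₂] [DecidableEq G₁] [DecidableEq G₂]

lemma vdc_image_prod (a : G₁) (b : G₂) (A : Finset G₁) (B : Finset G₂) :
    (A ×ˢ B).image (fun x => (a, b) + x) = (A.image (fun x => a + x)) ×ˢ (B.image (fun x => b + x)) := by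
  ext ⟨u, v⟩
  simp only [Finset.mem_image, Finset.mem_product, Prod.exists, Prod.mk_add_mk, Prod.mk.injEq]
  constructor
  · rintro ⟨x, y, ⟨hx, hy⟩, hxu, hyv⟩
    exact ⟨⟨x, hx, hxu⟩, ⟨y, hy, hyv⟩⟩
  · rintro ⟨⟨x, hx, hxu⟩, ⟨y, hy, hyv⟩⟩
    exact ⟨x, y, ⟨hx, hy⟩, hxu, hyv⟩

lemma vdc_symmdiff_prod_subset (A A' : Finset G₁) (B B' : Finset G₂) :
    ((A' ×ˢ B') \ (A ×ˢ B)) ∪ ((A ×ˢ B) \ (A' ×ˢ B')) ⊆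
      (((A' \ A) ∪ (A \ A')) ×ˢ (B ∪ B')) ∪ ((A ∪ A') ×ˢ ((B' \ B) ∪ (B \ B'))) := by
  intro ⟨x, y⟩ hxy
  simp only [Finset.mem_union, Finset.mem_sdiff, Finset.mem_product] at hxy ⊢
  by_cases hxA : x ∈ A <;> by_cases hxA' : x ∈ A' <;> by_cases hyB : y ∈ B <;>
    by_cases hyB' : y ∈ B' <;> tauto

lemma IsFolner.prod {Φ₁ : ℕ → Finset G₁} {Φ₂ : ℕ → Finset G₂}
    (h₁ : IsFolner Φ₁) (h₂ : IsFolner Φ₂) :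
    IsFolner (fun N => Φ₁ N ×ˢ Φ₂ N) := by
  refine ⟨fun N => (h₁.1 N).product (h₂.1 N), ?_⟩
  rintro ⟨a, b⟩
  have key : ∀ N,
      (((((Φ₁ N ×ˢ Φ₂ N).image (fun x => (a, b) + x)) \ (Φ₁ N ×ˢ Φ₂ N)) ∪
        ((Φ₁ N ×ˢ Φ₂ N) \ ((Φ₁ N ×ˢ Φ₂ N).image (fun x => (a, b) + x)))).card : ℝ) /
        (Φ₁ N ×ˢ Φ₂ N).card ≤
      2 * (((((Φ₁ N).image (fun x => a + x)) \ Φ₁ N) ∪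
          (Φ₁ N \ ((Φ₁ N).image (fun x => a + x)))).card / (Φ₁ N).card) +
      2 * (((((Φ₂ N).image (fun x => b + x)) \ Φ₂ N) ∪
          (Φ₂ N \ ((Φ₂ N).image (fun x => b + x)))).card / (Φ₂ N).card) := by
    intro N
    set A := Φ₁ N; set B := Φ₂ N
    set A' := A.image (fun x => a + x); set B' := B.image (fun x => b + x)
    have hA' : A'.card = A.card := Finset.card_image_of_injective _ (add_right_injective a)
    have hB' : B'.card = B.card := Finset.card_image_of_injective _ (add_right_injective b)
    have hApos : (0:ℝ) < A.card := by exact_mod_cast (h₁.1 N).card_pos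
    have hBpos : (0:ℝ) < B.card := by exact_mod_cast (h₂.1 N).card_pos
    have hsub := Finset.card_le_card (vdc_symmdiff_prod_subset A A' B B')
    have hcard : (((A' ×ˢ B') \ (A ×ˢ B)) ∪ ((A ×ˢ B) \ (A' ×ˢ B'))).card ≤
        ((A' \ A) ∪ (A \ A')).card * (2 * B.card) + (2 * A.card) * ((B' \ B) ∪ (B \ B')).card := by
      refine hsub.trans ?_
      calc ((((A' \ A) ∪ (A \ A')) ×ˢ (B ∪ B')) ∪ ((A ∪ A') ×ˢ ((B' \ B) ∪ (B \ B')))).card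
          ≤ (((A' \ A) ∪ (A \ A')) ×ˢ (B ∪ B')).card + ((A ∪ A') ×ˢ ((B' \ B) ∪ (B \ B'))).card :=
            Finset.card_union_le _ _
        _ = ((A' \ A) ∪ (A \ A')).card * (B ∪ B').card + (A ∪ A').card * ((B' \ B) ∪ (B \ B')).card := by
            rw [Finset.card_product, Finset.card_product]
        _ ≤ ((A' \ A) ∪ (A \ A')).card * (2 * B.card) + (2 * A.card) * ((B' \ B) ∪ (B \ B')).card := by
            gcongr
            · exact (Finset.card_union_le _ _).trans (by omega)
            · exact (Finset.card_union_le _ _).trans (by omega)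
    rw [vdc_image_prod]
    calc ((((A' ×ˢ B') \ (A ×ˢ B)) ∪ ((A ×ˢ B) \ (A' ×ˢ B'))).card : ℝ) / (A ×ˢ B).card
        ≤ ((((A' \ A) ∪ (A \ A')).card * (2 * B.card) + (2 * A.card) * ((B' \ B) ∪ (B \ B')).card : ℕ) : ℝ) /
          (A ×ˢ B).card := by
          have : ((((A' ×ˢ B') \ (A ×ˢ B)) ∪ ((A ×ˢ B) \ (A' ×ˢ B'))).card : ℝ) ≤
              ((((A' \ A) ∪ (A \ A')).card * (2 * B.card) + (2 * A.card) * ((B' \ B) ∪ (B \ B')).card : ℕ) : ℝ) := by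
            exact_mod_cast hcard
          gcongr
      _ = 2 * ((((A' \ A) ∪ (A \ A')).card : ℝ) / A.card) + 2 * ((((B' \ B) ∪ (B \ B')).card : ℝ) / B.card) := by
          rw [Finset.card_product]
          push_cast
          field_simp
  have h0 : ∀ N, (0:ℝ) ≤
      (((((Φ₁ N ×ˢ Φ₂ N).image (fun x => (a, b) + x)) \ (Φ₁ N ×ˢ Φ₂ N)) ∪
        ((Φ₁ N ×ˢ Φ₂ N) \ ((Φ₁ N ×ˢ Φ₂ N).image (fun x => (a, b) + x)))).card : ℝ) /
        (Φ₁ N ×ˢ Φ₂ N).card := fun N => by positivity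
  have hlim := ((h₁.2 a).const_mul 2).add ((h₂.2 b).const_mul 2)
  simp only [mul_zero, add_zero] at hlim
  exact squeeze_zero h0 key hlim

end helpers

lemma IsFolner.comp {G : Type*} [AddCommGroup G] [DecidableEq G] {Φ : ℕ → Finset G}
    (h : IsFolner Φ) {N : ℕ → ℕ} (hN : Tendsto N atTop atTop) : IsFolner (fun M => Φ (N M)) :=
  ⟨fun M => h.1 _, fun g => (h.2 g).comp hN⟩

lemma vdc_shift_sum {G H : Type*} [AddCommGroup G] [DecidableEq G] [NormedAddCommGroup H]
    (g : G → H) {C : ℝ} (hC : ∀ u, ‖g u‖ ≤ C) (A : Finset G) (v : G) :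
    ‖(∑ u ∈ A, g (v + u)) - ∑ u ∈ A, g u‖ ≤
      C * (((A.image (fun x => v + x)) \ A) ∪ (A \ (A.image (fun x => v + x)))).card := by
  have h1 : ∑ u ∈ A, g (v + u) = ∑ u ∈ A.image (fun x => v + x), g u :=
    (Finset.sum_image (fun x _ y _ h => add_right_injective v h)).symm
  set A' := A.image (fun x => v + x) with hA'
  have h2 : (∑ u ∈ A', g u) - ∑ u ∈ A, g u = (∑ u ∈ A' \ A, g u) - ∑ u ∈ A \ A', g u := by
    rw [← Finset.sum_inter_add_sum_sdiff A' A g, ← Finset.sum_inter_add_sum_sdiff A A' g,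
      Finset.inter_comm]
    abel
  have hC0 : 0 ≤ C := le_trans (norm_nonneg _) (hC 0)
  rw [h1, h2]
  calc ‖(∑ u ∈ A' \ A, g u) - ∑ u ∈ A \ A', g u‖
      ≤ ‖∑ u ∈ A' \ A, g u‖ + ‖∑ u ∈ A \ A', g u‖ := norm_sub_le _ _
    _ ≤ (A' \ A).card • C + (A \ A').card • C := by
        gcongr
        · exact (norm_sum_le_of_le _ (fun b _ => hC b)).trans_eq (Finset.sum_const C)
        · exact (norm_sum_le_of_le _ (fun b _ => hC b)).trans_eq (Finset.sum_const C)
    _ = C * (((A' \ A).card + (A \ A').card : ℕ) : ℝ) := by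
        simp [nsmul_eq_mul]; push_cast; ring
    _ = C * ((A' \ A) ∪ (A \ A')).card := by
        rw [Finset.card_union_of_disjoint disjoint_sdiff_sdiff]

lemma vdc_norm_avg_le {H : Type*} [NormedAddCommGroup H] [InnerProductSpace ℝ H]
    {α : Type*} (s : Finset α) (f : α → H) {C : ℝ} (hC0 : 0 ≤ C) (hC : ∀ u ∈ s, ‖f u‖ ≤ C) :
    ‖(s.card : ℝ)⁻¹ • ∑ u ∈ s, f u‖ ≤ C := by
  rcases s.eq_empty_or_nonempty with rfl | hs
  · simpa using hC0
  have hpos : (0:ℝ) < s.card := by exact_mod_cast hs.card_pos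
  rw [norm_smul, norm_inv, Real.norm_natCast]
  calc (s.card : ℝ)⁻¹ * ‖∑ u ∈ s, f u‖ ≤ (s.card : ℝ)⁻¹ * (s.card • C) := by
        gcongr
        exact (norm_sum_le_of_le _ hC).trans_eq (Finset.sum_const C)
    _ = C := by
        rw [nsmul_eq_mul]
        field_simp

lemma vdc_avg_sq {α : Type*} (s : Finset α) (f : α → ℝ) :
    ((s.card : ℝ)⁻¹ * ∑ u ∈ s, f u) ^ 2 ≤ (s.card : ℝ)⁻¹ * ∑ u ∈ s, (f u) ^ 2 := by
  rcases s.eq_empty_or_nonempty with rfl | hs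
  · simp
  have hpos : (0:ℝ) < s.card := by exact_mod_cast hs.card_pos
  have := sq_sum_le_card_mul_sum_sq (s := s) (f := f)
  rw [mul_pow]
  calc ((s.card:ℝ)⁻¹)^2 * (∑ u ∈ s, f u)^2 ≤ ((s.card:ℝ)⁻¹)^2 * (s.card * ∑ u ∈ s, (f u)^2) := by
        gcongr
    _ = (s.card : ℝ)⁻¹ * ∑ u ∈ s, (f u) ^ 2 := by
        field_simp

lemma vdc_avg_le_of_le {α : Type*} {s : Finset α} (hs : s.Nonempty) {f : α → ℝ} {c : ℝ}
    (h : ∀ u ∈ s, f u ≤ c) : (s.card : ℝ)⁻¹ * ∑ u ∈ s, f u ≤ c := by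
  have hpos : (0:ℝ) < s.card := by exact_mod_cast hs.card_pos
  rw [inv_mul_le_iff₀ hpos]
  calc ∑ u ∈ s, f u ≤ ∑ u ∈ s, c := Finset.sum_le_sum h
    _ = s.card * c := by rw [Finset.sum_const, nsmul_eq_mul]


set_option maxHeartbeats 1000000 in
/-- A van der Corput-type estimate: for a bounded family `{g_u}` in a Hilbert space
indexed by a finitely generated abelian group and a Følner sequence `{Φ_N}`, there is a
Følner sequence `{Θ_M}` in `G³` controlling the limsup of `‖avg‖²` by averaged
correlations. -/
theorem van_der_corput_folner
    {G : Type*} [AddCommGroup G] [AddGroup.FG G] [DecidableEq G]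
    {H : Type*} [NormedAddCommGroup H] [InnerProductSpace ℝ H] [CompleteSpace H]
    (g : G → H) (hg : ∃ C, ∀ u, ‖g u‖ ≤ C)
    (Φ : ℕ → Finset G) (hΦ : IsFolner Φ) :
    ∃ Θ : ℕ → Finset (G × G × G), IsFolner Θ ∧
      Filter.limsup
          (fun N => ‖((Φ N).card : ℝ)⁻¹ • ∑ u ∈ Φ N, g u‖ ^ 2) Filter.atTop ≤
        Filter.limsup
          (fun M => ((Θ M).card : ℝ)⁻¹ *
            ∑ t ∈ Θ M, (inner ℝ (g (t.1 + t.2.1)) (g (t.1 + t.2.2)) : ℝ))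
          Filter.atTop := by
  classical
  obtain ⟨C₀, hC₀⟩ := hg
  set C : ℝ := max C₀ 0 with hCdef
  have hC : ∀ u, ‖g u‖ ≤ C := fun u => (hC₀ u).trans (le_max_left _ _)
  have hC0 : (0:ℝ) ≤ C := le_max_right _ _
  set A : ℕ → H := fun N => ((Φ N).card : ℝ)⁻¹ • ∑ u ∈ Φ N, g u with hAdef
  set r : ℕ → G → ℝ := fun N v =>
    (((((Φ N).image (fun x => v + x)) \ Φ N) ∪
      (Φ N \ ((Φ N).image (fun x => v + x)))).card : ℝ) / (Φ N).card with hrdef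
  have hr0 : ∀ N v, 0 ≤ r N v := fun N v => by positivity
  have hcard : ∀ N, (0:ℝ) < (Φ N).card := fun N => by exact_mod_cast (hΦ.1 N).card_pos
  set x : ℕ → G → H := fun M u => ((Φ M).card : ℝ)⁻¹ • ∑ v ∈ Φ M, g (u + v) with hxdef
  have hxC : ∀ M u, ‖x M u‖ ≤ C := fun M u =>
    vdc_norm_avg_le _ _ hC0 (fun v _ => hC _)
  set S : ℕ → ℕ → ℝ := fun N M => ((Φ N).card : ℝ)⁻¹ * ∑ u ∈ Φ N, ‖x M u‖ ^ 2 with hSdef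
  set δ : ℕ → ℕ → ℝ := fun N M => C * (((Φ M).card : ℝ)⁻¹ * ∑ v ∈ Φ M, r N v) with hδdef
  have hδ0 : ∀ N M, 0 ≤ δ N M := fun N M =>
    mul_nonneg hC0 (mul_nonneg (by positivity) (Finset.sum_nonneg fun v _ => hr0 N v))
  have hAC : ∀ N, ‖A N‖ ≤ C := fun N => vdc_norm_avg_le _ _ hC0 (fun v _ => hC _)
  -- KEY1
  have key1 : ∀ N M, ‖A N‖ ^ 2 ≤ S N M + 2 * C * δ N M + δ N M ^ 2 := by
    intro N M
    set B : H := ((Φ N).card : ℝ)⁻¹ • ∑ u ∈ Φ N, x M u with hBdef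
    have hBalt : B = ((Φ M).card : ℝ)⁻¹ • ∑ v ∈ Φ M, (((Φ N).card : ℝ)⁻¹ • ∑ u ∈ Φ N, g (u + v)) := by
      rw [hBdef, hxdef]
      simp only [Finset.smul_sum]
      rw [Finset.sum_comm]
      refine Finset.sum_congr rfl fun v _ => Finset.sum_congr rfl fun u _ => ?_
      rw [smul_comm]
    have hdist : ‖A N - B‖ ≤ δ N M := by
      have hABv : ∀ v, ‖A N - ((Φ N).card : ℝ)⁻¹ • ∑ u ∈ Φ N, g (u + v)‖ ≤ C * r N v := by
        intro v
        have : ∑ u ∈ Φ N, g (u + v) = ∑ u ∈ Φ N, g (v + u) := by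
          apply Finset.sum_congr rfl; intro u _; rw [add_comm]
        rw [this, hAdef, ← smul_sub, norm_smul, norm_inv, Real.norm_natCast]
        have hb := vdc_shift_sum g hC (Φ N) v
        have : ‖(∑ u ∈ Φ N, g u) - ∑ u ∈ Φ N, g (v + u)‖ ≤
            C * (((Φ N).image (fun z => v + z) \ Φ N) ∪ (Φ N \ (Φ N).image (fun z => v + z))).card := by
          rw [norm_sub_rev]; exact hb
        rw [hrdef]
        calc ((Φ N).card : ℝ)⁻¹ * ‖(∑ u ∈ Φ N, g u) - ∑ u ∈ Φ N, g (v + u)‖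
            ≤ ((Φ N).card : ℝ)⁻¹ * (C * (((Φ N).image (fun z => v + z) \ Φ N) ∪
               (Φ N \ (Φ N).image (fun z => v + z))).card) := by
              gcongr
          _ = C * ((((((Φ N).image (fun z => v + z)) \ Φ N) ∪
               (Φ N \ ((Φ N).image (fun z => v + z)))).card : ℝ) / (Φ N).card) := by
              field_simp
      have hsplit : A N - B = ((Φ M).card : ℝ)⁻¹ •
          ∑ v ∈ Φ M, (A N - ((Φ N).card : ℝ)⁻¹ • ∑ u ∈ Φ N, g (u + v)) := by
        rw [hBalt, Finset.sum_sub_distrib, smul_sub, Finset.sum_const, ← Nat.cast_smul_eq_nsmul ℝ,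
          smul_smul, inv_mul_cancel₀ (hcard M).ne', one_smul]
      rw [hsplit, hδdef]
      rw [norm_smul, norm_inv, Real.norm_natCast]
      calc ((Φ M).card : ℝ)⁻¹ * ‖∑ v ∈ Φ M, (A N - ((Φ N).card : ℝ)⁻¹ • ∑ u ∈ Φ N, g (u + v))‖
          ≤ ((Φ M).card : ℝ)⁻¹ * ∑ v ∈ Φ M, (C * r N v) := by
            gcongr
            exact (norm_sum_le _ _).trans (Finset.sum_le_sum (fun v _ => hABv v))
        _ = C * (((Φ M).card : ℝ)⁻¹ * ∑ v ∈ Φ M, r N v) := by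
            rw [← Finset.mul_sum]; ring
    have hBS : ‖B‖ ^ 2 ≤ S N M := by
      have h1 : ‖B‖ ≤ ((Φ N).card : ℝ)⁻¹ * ∑ u ∈ Φ N, ‖x M u‖ := by
        rw [hBdef, norm_smul, norm_inv, Real.norm_natCast]
        gcongr
        exact norm_sum_le _ _
      have h2 : ‖B‖ ^ 2 ≤ (((Φ N).card : ℝ)⁻¹ * ∑ u ∈ Φ N, ‖x M u‖) ^ 2 := by
        apply pow_le_pow_left₀ (norm_nonneg _) h1
      exact h2.trans ((vdc_avg_sq (Φ N) (fun u => ‖x M u‖)).trans_eq rfl)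
    have hBC : ‖B‖ ≤ C := vdc_norm_avg_le _ _ hC0 (fun u _ => hxC M u)
    have htri : ‖A N‖ ≤ ‖B‖ + ‖A N - B‖ := by
      calc ‖A N‖ = ‖B + (A N - B)‖ := by rw [add_sub_cancel]
        _ ≤ ‖B‖ + ‖A N - B‖ := norm_add_le _ _
    nlinarith [norm_nonneg (A N), norm_nonneg B, norm_nonneg (A N - B), hδ0 N M]
  -- KEY3 : for fixed M, δ N M → 0 as N → ∞
  have key3 : ∀ M, Tendsto (fun N => δ N M) atTop (nhds 0) := by
    intro M
    have hsum : Tendsto (fun N => ∑ v ∈ Φ M, r N v) atTop (nhds 0) := by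
      have h := tendsto_finset_sum (Φ M) (fun (v : G) (_ : v ∈ Φ M) => hΦ.2 v)
      simp only [Finset.sum_const_zero] at h
      exact h
    have : Tendsto (fun N => C * (((Φ M).card : ℝ)⁻¹ * ∑ v ∈ Φ M, r N v)) atTop (nhds (C * (((Φ M).card : ℝ)⁻¹ * 0))) :=
      (tendsto_const_nhds.mul (tendsto_const_nhds.mul hsum))
    simpa using this
  -- limsup L and choice of subsequence
  set L : ℝ := limsup (fun N => ‖A N‖ ^ 2) atTop with hLdef
  have hbdd : IsBoundedUnder (· ≤ ·) atTop (fun N => ‖A N‖ ^ 2) :=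
    isBoundedUnder_of ⟨C ^ 2, fun N => pow_le_pow_left₀ (norm_nonneg _) (hAC N) 2⟩
  have hcobdd : IsCoboundedUnder (· ≤ ·) atTop (fun N => ‖A N‖ ^ 2) :=
    IsBoundedUnder.isCoboundedUnder_le (isBoundedUnder_of ⟨0, fun N => by positivity⟩)
  have hchoice : ∀ M : ℕ, ∃ N, M ≤ N ∧ L - 1 / (M + 1) < ‖A N‖ ^ 2 ∧ δ N M < 1 / (M + 1) := by
    intro M
    have he : (0:ℝ) < 1 / (M + 1) := by positivity
    have h1 : ∃ᶠ N in atTop, L - 1 / (M + 1) < ‖A N‖ ^ 2 :=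
      frequently_lt_of_lt_limsup hcobdd (by linarith [sub_lt_self L he])
    have h2 : ∀ᶠ N in atTop, M ≤ N ∧ δ N M < 1 / (M + 1) :=
      (eventually_ge_atTop M).and ((key3 M).eventually (gt_mem_nhds he))
    obtain ⟨N, hN1, hN2, hN3⟩ := (h1.and_eventually h2).exists
    exact ⟨N, hN2, hN1, hN3⟩
  choose Nf hNf1 hNf2 hNf3 using hchoice
  have hNftop : Tendsto Nf atTop atTop := tendsto_atTop_mono hNf1 tendsto_id
  refine ⟨fun M => Φ (Nf M) ×ˢ (Φ M ×ˢ Φ M), (hΦ.comp hNftop).prod (hΦ.prod hΦ), ?_⟩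
  -- identify RHS with S (Nf M) M
  have hRHS : ∀ M, (((Φ (Nf M) ×ˢ (Φ M ×ˢ Φ M)).card : ℝ)⁻¹ *
      ∑ t ∈ Φ (Nf M) ×ˢ (Φ M ×ˢ Φ M), (inner ℝ (g (t.1 + t.2.1)) (g (t.1 + t.2.2)) : ℝ)) =
      S (Nf M) M := by
    intro M
    rw [Finset.sum_product]
    have hinner : ∀ u, (∑ p ∈ Φ M ×ˢ Φ M, (inner ℝ (g (u + p.1)) (g (u + p.2)) : ℝ)) =
        ‖∑ v ∈ Φ M, g (u + v)‖ ^ 2 := by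
      intro u
      rw [Finset.sum_product]
      have : (∑ v ∈ Φ M, ∑ w ∈ Φ M, (inner ℝ (g (u + v)) (g (u + w)) : ℝ)) =
          (inner ℝ (∑ v ∈ Φ M, g (u + v)) (∑ w ∈ Φ M, g (u + w)) : ℝ) := by
        rw [sum_inner]
        exact Finset.sum_congr rfl fun v _ => by rw [inner_sum]
      rw [this, real_inner_self_eq_norm_sq]
    simp only [hinner]
    have hSval : S (Nf M) M = ((Φ (Nf M)).card : ℝ)⁻¹ * ∑ u ∈ Φ (Nf M), ‖x M u‖ ^ 2 := rfl
    have hx2 : ∀ u : G, ‖x M u‖ ^ 2 =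
        ((Φ M).card : ℝ)⁻¹ * (((Φ M).card : ℝ)⁻¹ * ‖∑ v ∈ Φ M, g (u + v)‖ ^ 2) := by
      intro u
      have hxval : x M u = ((Φ M).card : ℝ)⁻¹ • ∑ v ∈ Φ M, g (u + v) := rfl
      rw [hxval, norm_smul, norm_inv, Real.norm_natCast, mul_pow]
      ring
    have hcards : ((Φ (Nf M) ×ˢ (Φ M ×ˢ Φ M)).card : ℝ) =
        (Φ (Nf M)).card * ((Φ M).card * (Φ M).card) := by
      rw [Finset.card_product, Finset.card_product]; push_cast; ring
    rw [hSval, hcards, Finset.mul_sum, Finset.mul_sum]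
    apply Finset.sum_congr rfl
    intro u _
    rw [hx2 u]
    have hM := (hcard M).ne'
    have hN := (hcard (Nf M)).ne'
    field_simp
  -- lower bound for S (Nf M) M
  have hSlow : ∀ M : ℕ, L - (2 * C + 2) * (1 / (M + 1)) ≤ S (Nf M) M := by
    intro M
    have h1 := key1 (Nf M) M
    have h2 := hNf2 M
    have h3 := hNf3 M
    have h0 := hδ0 (Nf M) M
    have he : (0:ℝ) < 1 / (M + 1) := by positivity
    have he1 : (1:ℝ) / (M + 1) ≤ 1 := by
      rw [div_le_one (by positivity)]
      exact le_add_of_nonneg_left (Nat.cast_nonneg M)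
    have hδsq : δ (Nf M) M ^ 2 ≤ 1 / (M + 1 : ℝ) := by
      calc δ (Nf M) M ^ 2 ≤ (1 / (M + 1 : ℝ)) ^ 2 := by
            apply pow_le_pow_left₀ h0 h3.le
        _ ≤ 1 / (M + 1 : ℝ) := by nlinarith
    nlinarith [mul_le_mul_of_nonneg_left h3.le (by linarith : (0:ℝ) ≤ 2 * C)]
  -- conclude
  have htendlow : Tendsto (fun M : ℕ => L - (2 * C + 2) * (1 / (M + 1 : ℝ))) atTop (nhds L) := by
    have := tendsto_one_div_add_atTop_nhds_zero_nat (𝕜 := ℝ)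
    have h2 : Tendsto (fun M : ℕ => (2 * C + 2) * (1 / (M + 1 : ℝ))) atTop (nhds 0) := by
      simpa using tendsto_const_nhds.mul this
    simpa using tendsto_const_nhds.sub h2
  have hLle : L ≤ limsup (fun M => S (Nf M) M) atTop := by
    have h1 : limsup (fun M : ℕ => L - (2 * C + 2) * (1 / (M + 1 : ℝ))) atTop = L :=
      htendlow.limsup_eq
    rw [← h1]
    refine limsup_le_limsup (Filter.Eventually.of_forall hSlow) ?_ ?_
    · exact htendlow.isBoundedUnder_ge.isCoboundedUnder_le
    · exact isBoundedUnder_of ⟨C ^ 2, fun M => vdc_avg_le_of_le (hΦ.1 (Nf M))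
        (fun u _ => pow_le_pow_left₀ (norm_nonneg _) (hxC M u) 2)⟩
  calc limsup (fun N => ‖A N‖ ^ 2) atTop = L := rfl
    _ ≤ limsup (fun M => S (Nf M) M) atTop := hLle
    _ = _ := by
        apply congrArg (fun f => limsup f atTop)
        ext M
        rw [hRHS M]
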